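/- Let (q₁,q₂,q₃,q₄,q₅) = (1,1,1,-1,-3). For every A ∈ SU(5) there exists h ∈ Sp2 such that Σ_{ℓ=1}^5 (|(Ah)_{ℓ2}|² + |(Ah)_{ℓ4}|²) q_ℓ = 0, where Ah denotes the matrix product. -/

import Mathlib

open Finset

noncomputable section

/-- SU(5): 5×5 special unitary complex matrices. -/
def SU5 : Set (Matrix (Fin 5) (Fin 5) ℂ) :=
  {A | A * A.conjTranspose = 1 ∧ A.det = 1}

/-- The image of the embedding Sp(2) ↪ SU(5). -/
def Sp2 : Set (Matrix (Fin 5) (Fin 5) ℂ) :=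
  {h | h ∈ SU5 ∧
    (∀ i : Fin 5, h i 4 = if i = 4 then 1 else 0) ∧
    (∀ i : Fin 5, h 4 i = if i = 4 then 1 else 0) ∧
    (∀ i j : Fin 5, i < 2 → j < 2 →
      h (i + 2) (j + 2) = (starRingEnd ℂ) (h i j) ∧
      h (i + 2) j = -(starRingEnd ℂ) (h i (j + 2)))}

open Matrix

def Jst (v : Fin 5 → ℂ) : Fin 5 → ℂ :=
  ![-(starRingEnd ℂ) (v 2), -(starRingEnd ℂ) (v 3), (starRingEnd ℂ) (v 0), (starRingEnd ℂ) (v 1), 0]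

def qv : Fin 5 → ℝ := ![1, 1, 1, -1, -3]

def Gfun (A : Matrix (Fin 5) (Fin 5) ℂ) (v : Fin 5 → ℂ) : ℝ :=
  ∑ ℓ : Fin 5, (‖(A *ᵥ v) ℓ‖ ^ 2 + ‖(A *ᵥ Jst v) ℓ‖ ^ 2) * qv ℓ

lemma norm_pres {B : Matrix (Fin 5) (Fin 5) ℂ} (hB : Bᴴ * B = 1) (x : Fin 5 → ℂ) :
    ∑ ℓ : Fin 5, ‖(B *ᵥ x) ℓ‖ ^ 2 = ∑ ℓ : Fin 5, ‖x ℓ‖ ^ 2 := by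
  have key : star (B *ᵥ x) ⬝ᵥ (B *ᵥ x) = star x ⬝ᵥ x := by
    rw [star_mulVec, dotProduct_mulVec, vecMul_vecMul, hB, vecMul_one]
  have h1 : ∀ y : Fin 5 → ℂ, (star y ⬝ᵥ y).re = ∑ ℓ : Fin 5, ‖y ℓ‖ ^ 2 := by
    intro y
    simp only [dotProduct, Pi.star_apply, Complex.re_sum, Complex.star_def,
      Complex.mul_re, Complex.conj_re, Complex.conj_im, Complex.sq_norm, Complex.normSq_apply]
    apply Finset.sum_congr rfl; intros; ring
  rw [← h1, ← h1, key]

lemma jst_norm (v : Fin 5 → ℂ) (hv4 : v 4 = 0) :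
    ∑ ℓ : Fin 5, ‖Jst v ℓ‖ ^ 2 = ∑ ℓ : Fin 5, ‖v ℓ‖ ^ 2 := by
  simp [Fin.sum_univ_five, Jst, hv4]
  ring

lemma Gfun_cont (A : Matrix (Fin 5) (Fin 5) ℂ) : Continuous (Gfun A) := by
  unfold Gfun
  have hmv : ∀ (B : Matrix (Fin 5) (Fin 5) ℂ) (ℓ : Fin 5),
      Continuous fun v : Fin 5 → ℂ => (B *ᵥ v) ℓ := by
    intro B ℓ
    simp only [mulVec, dotProduct]
    exact continuous_finset_sum _ fun k _ => continuous_const.mul (continuous_apply k)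
  have hJ : Continuous Jst := by
    apply continuous_pi
    intro i
    have hc : ∀ k : Fin 5, Continuous fun v : Fin 5 → ℂ => (starRingEnd ℂ) (v k) :=
      fun k => continuous_star.comp (continuous_apply k)
    fin_cases i
    · exact (hc 2).neg
    · exact (hc 3).neg
    · exact hc 0
    · exact hc 1
    · exact continuous_const
  apply continuous_finset_sum
  intro ℓ _
  apply Continuous.mul _ continuous_const
  apply Continuous.add
  · exact ((continuous_norm.comp (hmv A ℓ)).pow 2)
  · exact ((continuous_norm.comp ((hmv A ℓ).comp hJ)).pow 2)

lemma Jst_smul (c : ℂ) (v : Fin 5 → ℂ) : Jst (c • v) = (starRingEnd ℂ) c • Jst v := by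
  funext i
  fin_cases i <;> simp [Jst, mul_comm]

lemma Gfun_smul (A : Matrix (Fin 5) (Fin 5) ℂ) (c : ℂ) (v : Fin 5 → ℂ) :
    Gfun A (c • v) = ‖c‖ ^ 2 * Gfun A v := by
  unfold Gfun
  rw [Finset.mul_sum]
  apply Finset.sum_congr rfl
  intro ℓ _
  rw [Jst_smul, mulVec_smul, mulVec_smul]
  simp [_root_.map_mul, mul_pow]
  ring

lemma Gneg (A : Matrix (Fin 5) (Fin 5) ℂ) (hAu : A * Aᴴ = 1) :
    ∃ v : Fin 5 → ℂ, v ≠ 0 ∧ v 4 = 0 ∧ Gfun A v ≤ 0 := by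
  have hA' : Aᴴ * A = 1 := mul_eq_one_comm.mp hAu
  have hA'' : (Aᴴ)ᴴ * Aᴴ = 1 := by rwa [conjTranspose_conjTranspose]
  -- choose α β
  obtain ⟨α, β, hne, hperp⟩ :
      ∃ α β : ℂ, ¬(α = 0 ∧ β = 0) ∧
        (starRingEnd ℂ) (A 3 4) * α + (starRingEnd ℂ) (A 4 4) * β = 0 := by
    by_cases hc : A 3 4 = 0 ∧ A 4 4 = 0
    · exact ⟨0, 1, by simp, by simp [hc.1, hc.2]⟩
    · refine ⟨(starRingEnd ℂ) (A 4 4), -((starRingEnd ℂ) (A 3 4)), ?_, by ring⟩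
      rintro ⟨h1, h2⟩
      exact hc ⟨by simpa using h2, by simpa using h1⟩
  set y : Fin 5 → ℂ := ![0, 0, 0, α, β] with hy
  set v : Fin 5 → ℂ := Aᴴ *ᵥ y with hv
  have Avy : A *ᵥ v = y := by rw [hv, mulVec_mulVec, hAu, one_mulVec]
  have v4 : v 4 = 0 := by
    rw [hv]
    simpa [mulVec, dotProduct, Fin.sum_univ_five, conjTranspose_apply, hy] using hperp
  have vne : v ≠ 0 := by
    intro h0
    have : y = 0 := by rw [← Avy, h0, mulVec_zero]
    apply hne
    constructor
    · have := congrFun this 3; simpa [hy] using this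
    · have := congrFun this 4; simpa [hy] using this
  refine ⟨v, vne, v4, ?_⟩
  have split : Gfun A v = (∑ ℓ : Fin 5, ‖(A *ᵥ v) ℓ‖ ^ 2 * qv ℓ)
      + ∑ ℓ : Fin 5, ‖(A *ᵥ Jst v) ℓ‖ ^ 2 * qv ℓ := by
    unfold Gfun; rw [← Finset.sum_add_distrib]
    exact Finset.sum_congr rfl fun ℓ _ => by ring
  have part1 : (∑ ℓ : Fin 5, ‖(A *ᵥ v) ℓ‖ ^ 2 * qv ℓ)
      = -(‖α‖ ^ 2) - 3 * ‖β‖ ^ 2 := by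
    rw [Avy]
    simp [Fin.sum_univ_five, hy, qv]
    ring
  have part2 : (∑ ℓ : Fin 5, ‖(A *ᵥ Jst v) ℓ‖ ^ 2 * qv ℓ)
      ≤ ‖α‖ ^ 2 + ‖β‖ ^ 2 := by
    have step1 : (∑ ℓ : Fin 5, ‖(A *ᵥ Jst v) ℓ‖ ^ 2 * qv ℓ)
        ≤ ∑ ℓ : Fin 5, ‖(A *ᵥ Jst v) ℓ‖ ^ 2 := by
      apply Finset.sum_le_sum
      intro ℓ _
      have h1 : qv ℓ ≤ 1 := by fin_cases ℓ <;> norm_num [qv]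
      nlinarith [sq_nonneg (‖(A *ᵥ Jst v) ℓ‖)]
    have step2 : (∑ ℓ : Fin 5, ‖(A *ᵥ Jst v) ℓ‖ ^ 2)
        = ‖α‖ ^ 2 + ‖β‖ ^ 2 := by
      rw [norm_pres hA', jst_norm v v4, hv, norm_pres hA'']
      simp [Fin.sum_univ_five, hy]
    linarith
  rw [split, part1]
  linarith [part2, sq_nonneg (‖α‖), sq_nonneg (‖β‖)]

lemma Gpos (A : Matrix (Fin 5) (Fin 5) ℂ) (hAu : A * Aᴴ = 1) :
    ∃ v : Fin 5 → ℂ, v ≠ 0 ∧ v 4 = 0 ∧ 0 ≤ Gfun A v := by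
  have hA' : Aᴴ * A = 1 := mul_eq_one_comm.mp hAu
  have hA'' : (Aᴴ)ᴴ * Aᴴ = 1 := by rwa [conjTranspose_conjTranspose]
  set em : Fin 3 → Fin 5 := ![0, 1, 2] with hem
  set M : Matrix (Fin 3) (Fin 3) ℂ := Matrix.of fun i j =>
    if i = 0 then (starRingEnd ℂ) (A (em j) 4)
    else if i = 1 then
      -(starRingEnd ℂ) (A 4 0 * A (em j) 2) - (starRingEnd ℂ) (A 4 1 * A (em j) 3)
        + (starRingEnd ℂ) (A 4 2 * A (em j) 0) + (starRingEnd ℂ) (A 4 3 * A (em j) 1)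
    else 0 with hM
  have hdet : M.det = 0 := Matrix.det_eq_zero_of_row_eq_zero 2 (fun j => by simp [hM])
  obtain ⟨y, hyne, hker⟩ : ∃ y ≠ 0, M *ᵥ y = 0 :=
    (Matrix.exists_mulVec_eq_zero_iff).mpr hdet
  set yt : Fin 5 → ℂ := ![y 0, y 1, y 2, 0, 0] with hyt
  set w : Fin 5 → ℂ := Aᴴ *ᵥ yt with hw
  have Aw : A *ᵥ w = yt := by rw [hw, mulVec_mulVec, hAu, one_mulVec]
  have ytne : yt ≠ 0 := by
    intro h0
    apply hyne
    funext i
    fin_cases i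
    · have := congrFun h0 0; simpa [hyt] using this
    · have := congrFun h0 1; simpa [hyt] using this
    · have := congrFun h0 2; simpa [hyt] using this
  have wne : w ≠ 0 := by
    intro h0
    exact ytne (by rw [← Aw, h0, mulVec_zero])
  have w4 : w 4 = 0 := by
    have h0 := congrFun hker 0
    rw [hw]
    simp only [mulVec, dotProduct, Fin.sum_univ_five, Fin.sum_univ_three,
      conjTranspose_apply, hyt, hM, hem] at h0 ⊢
    simpa using h0
  have x4 : (A *ᵥ Jst w) 4 = 0 := by
    have h1 := congrFun hker 1
    have expand : (A *ᵥ Jst w) 4 = (starRingEnd ℂ) ((M *ᵥ y) 1) := by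
      simp only [mulVec, dotProduct, Fin.sum_univ_five, Fin.sum_univ_three, Jst,
        conjTranspose_apply, hyt, hM, hem, hw, map_add, map_neg, _root_.map_mul, map_sub,
        Complex.conj_conj, Matrix.of_apply]
      simp
      ring
    rw [expand, h1]
    simp
  refine ⟨w, wne, w4, ?_⟩
  have split : Gfun A w = (∑ ℓ : Fin 5, ‖(A *ᵥ w) ℓ‖ ^ 2 * qv ℓ)
      + ∑ ℓ : Fin 5, ‖(A *ᵥ Jst w) ℓ‖ ^ 2 * qv ℓ := by
    unfold Gfun; rw [← Finset.sum_add_distrib]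
    exact Finset.sum_congr rfl fun ℓ _ => by ring
  set s : ℝ := ‖y 0‖ ^ 2 + ‖y 1‖ ^ 2 + ‖y 2‖ ^ 2 with hs
  have part1 : (∑ ℓ : Fin 5, ‖(A *ᵥ w) ℓ‖ ^ 2 * qv ℓ) = s := by
    rw [Aw]
    simp [Fin.sum_univ_five, hyt, qv, hs]
  have step2 : (∑ ℓ : Fin 5, ‖(A *ᵥ Jst w) ℓ‖ ^ 2) = s := by
    rw [norm_pres hA', jst_norm w w4, hw, norm_pres hA'']
    simp [Fin.sum_univ_five, hyt, hs]
  have part2 : -s ≤ ∑ ℓ : Fin 5, ‖(A *ᵥ Jst w) ℓ‖ ^ 2 * qv ℓ := by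
    rw [← step2]
    simp only [Fin.sum_univ_five, x4, qv]
    simp
    nlinarith [sq_nonneg (‖(A *ᵥ Jst w) 0‖), sq_nonneg (‖(A *ᵥ Jst w) 1‖),
      sq_nonneg (‖(A *ᵥ Jst w) 2‖), sq_nonneg (‖(A *ᵥ Jst w) 3‖)]
  rw [split, part1]
  linarith

lemma Gzero (A : Matrix (Fin 5) (Fin 5) ℂ) (hAu : A * Aᴴ = 1) :
    ∃ v : Fin 5 → ℂ, v ≠ 0 ∧ v 4 = 0 ∧ Gfun A v = 0 := by
  obtain ⟨vn, hvn0, hvn4, hvnle⟩ := Gneg A hAu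
  obtain ⟨vp, hvp0, hvp4, hvpge⟩ := Gpos A hAu
  by_cases hdep : ∃ c : ℂ, vp = c • vn
  · obtain ⟨c, hc⟩ := hdep
    refine ⟨vp, hvp0, hvp4, le_antisymm ?_ hvpge⟩
    rw [hc, Gfun_smul]
    have := sq_nonneg (‖c‖)
    nlinarith
  · set f : ℝ → ℝ := fun t => Gfun A ((1 - (t : ℂ)) • vn + (t : ℂ) • vp) with hf
    have hcont : Continuous f := by
      apply (Gfun_cont A).comp
      exact ((continuous_const.sub Complex.continuous_ofReal).smul continuous_const).add
        (Complex.continuous_ofReal.smul continuous_const)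
    have hf0 : f 0 = Gfun A vn := by simp [hf]
    have hf1 : f 1 = Gfun A vp := by simp [hf]
    have hmem : (0 : ℝ) ∈ Set.Icc (f 0) (f 1) := by
      rw [hf0, hf1]; exact ⟨hvnle, hvpge⟩
    obtain ⟨t, _, hft⟩ := intermediate_value_Icc zero_le_one hcont.continuousOn hmem
    refine ⟨(1 - (t : ℂ)) • vn + (t : ℂ) • vp, ?_, ?_, hft⟩
    · intro h0
      by_cases ht0 : (t : ℂ) = 0
      · apply hvn0
        simpa [ht0] using h0
      · apply hdep
        have h1 : (t : ℂ) • vp = ((t : ℂ) - 1) • vn := by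
          have h2 : (t : ℂ) • vp - ((t : ℂ) - 1) • vn = 0 := by
            rw [← h0]; module
          exact sub_eq_zero.mp h2
        refine ⟨(t : ℂ)⁻¹ * ((t : ℂ) - 1), ?_⟩
        rw [← smul_smul, ← h1, inv_smul_smul₀ ht0]
    · simp [hvn4, hvp4]

lemma conj_mul_self' (z : ℂ) : (starRingEnd ℂ) z * z = ((‖z‖ ^ 2 : ℝ) : ℂ) := by
  rw [mul_comm, Complex.mul_conj, Complex.normSq_eq_norm_sq]

set_option maxHeartbeats 3200000 in
lemma build_h (u c₀ : Fin 5 → ℂ) (hu4 : u 4 = 0) (hc4 : c₀ 4 = 0)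
    (hnu : (starRingEnd ℂ) (u 0) * u 0 + (starRingEnd ℂ) (u 1) * u 1
      + (starRingEnd ℂ) (u 2) * u 2 + (starRingEnd ℂ) (u 3) * u 3 = 1)
    (hnc : (starRingEnd ℂ) (c₀ 0) * c₀ 0 + (starRingEnd ℂ) (c₀ 1) * c₀ 1
      + (starRingEnd ℂ) (c₀ 2) * c₀ 2 + (starRingEnd ℂ) (c₀ 3) * c₀ 3 = 1)
    (ho1 : (starRingEnd ℂ) (c₀ 0) * u 0 + (starRingEnd ℂ) (c₀ 1) * u 1
      + (starRingEnd ℂ) (c₀ 2) * u 2 + (starRingEnd ℂ) (c₀ 3) * u 3 = 0)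
    (ho2 : -((starRingEnd ℂ) (c₀ 0) * (starRingEnd ℂ) (u 2))
      - (starRingEnd ℂ) (c₀ 1) * (starRingEnd ℂ) (u 3)
      + (starRingEnd ℂ) (c₀ 2) * (starRingEnd ℂ) (u 0)
      + (starRingEnd ℂ) (c₀ 3) * (starRingEnd ℂ) (u 1) = 0) :
    ∃ h ∈ Sp2, (∀ k, h k 1 = u k) ∧ (∀ k, h k 3 = Jst u k) := by
  have ho1' : c₀ 0 * (starRingEnd ℂ) (u 0) + c₀ 1 * (starRingEnd ℂ) (u 1)
      + c₀ 2 * (starRingEnd ℂ) (u 2) + c₀ 3 * (starRingEnd ℂ) (u 3) = 0 := by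
    have := congrArg (starRingEnd ℂ) ho1
    simpa [map_add, _root_.map_mul, mul_comm] using this
  have ho2' : -(c₀ 0 * u 2) - c₀ 1 * u 3 + c₀ 2 * u 0 + c₀ 3 * u 1 = 0 := by
    have := congrArg (starRingEnd ℂ) ho2
    simpa [map_add, map_sub, map_neg, _root_.map_mul, mul_comm] using this
  set e4 : Fin 5 → ℂ := fun i => if i = 4 then 1 else 0 with he4
  set cols : Fin 5 → Fin 5 → ℂ := ![c₀, u, Jst c₀, Jst u, e4] with hcols
  set h : Matrix (Fin 5) (Fin 5) ℂ := Matrix.of (fun i j => cols j i) with hh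
  have hent : ∀ i j, h i j = cols j i := fun i j => rfl
  have hunit : hᴴ * h = 1 := by
    ext j k
    rw [Matrix.mul_apply]
    simp only [conjTranspose_apply, hent, Matrix.one_apply, Fin.sum_univ_five]
    fin_cases j <;> fin_cases k <;>
      simp [hcols, Jst, he4, hu4, hc4, Complex.conj_conj] <;>
      first
        | linear_combination hnc
        | linear_combination hnu
        | linear_combination ho1
        | linear_combination ho1'
        | linear_combination ho2
        | linear_combination ho2'
        | linear_combination -ho1
        | linear_combination -ho1'
        | linear_combination -ho2
        | linear_combination -ho2'
        | ring
  have hdet : h.det = 1 := by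
    simp only [Matrix.det_succ_row_zero, Fin.sum_univ_succ, Fin.sum_univ_zero,
      Matrix.submatrix_apply, Fin.succ_zero_eq_one, Fin.succ_one_eq_two, hent]
    norm_num [hcols, Jst, he4, hu4, hc4, Fin.succ, Fin.succAbove, Fin.lt_def,
      Matrix.cons_val_zero, Matrix.cons_val_one, Matrix.head_cons, Fin.castSucc, Fin.castAdd,
      Fin.castLE]
    have f3 : ∀ (hp : 3 < 5), (⟨3, hp⟩ : Fin 5) = 3 := fun _ => rfl
    have f4 : ∀ (hp : 4 < 5), (⟨4, hp⟩ : Fin 5) = 4 := fun _ => rfl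
    simp only [f3, f4, hu4, hc4]
    norm_num
    simp only [Matrix.cons_val_two, Matrix.tail_cons, Matrix.head_cons, Matrix.cons_val_zero, Matrix.cons_val_one, Matrix.cons_val_three, Matrix.cons_val_four]
    norm_num
    linear_combination hnc * ((starRingEnd ℂ) (u 0) * u 0 + (starRingEnd ℂ) (u 1) * u 1
        + (starRingEnd ℂ) (u 2) * u 2 + (starRingEnd ℂ) (u 3) * u 3) + hnu
      - ho1 * (c₀ 0 * (starRingEnd ℂ) (u 0) + c₀ 1 * (starRingEnd ℂ) (u 1)
        + c₀ 2 * (starRingEnd ℂ) (u 2) + c₀ 3 * (starRingEnd ℂ) (u 3))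
      - ho2 * (-(c₀ 0 * u 2) - c₀ 1 * u 3 + c₀ 2 * u 0 + c₀ 3 * u 1)
  refine ⟨h, ⟨⟨mul_eq_one_comm.mp hunit, hdet⟩, ?_, ?_, ?_⟩, ?_, ?_⟩
  · intro i
    show cols 4 i = _
    simp [hcols, he4]
  · intro i
    fin_cases i <;> simp [hent, hcols, Jst, he4, hu4, hc4]
  · intro i j hi hj
    fin_cases i <;> fin_cases j <;>
      first
        | exact absurd hi (by decide)
        | exact absurd hj (by decide)
        | (constructor <;> simp [hent, hcols, Jst, he4, Complex.conj_conj])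
  · intro k
    show cols 1 k = u k
    simp [hcols]
  · intro k
    show cols 3 k = Jst u k
    simp [hcols]


set_option maxHeartbeats 3200000 in
theorem stmt4 (A : Matrix (Fin 5) (Fin 5) ℂ) (hA : A ∈ SU5) :
    ∃ h ∈ Sp2,
      ∑ ℓ : Fin 5, (‖(A * h) ℓ 1‖ ^ 2 + ‖(A * h) ℓ 3‖ ^ 2) *
        (((![1, 1, 1, -1, -3] : Fin 5 → ℤ) ℓ : ℤ) : ℝ) = 0 := by
  obtain ⟨hAu, hAdet⟩ := hA
  obtain ⟨v, hvne, hv4, hvG⟩ := Gzero A hAu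
  set r : ℝ := ‖v 0‖ ^ 2 + ‖v 1‖ ^ 2 + ‖v 2‖ ^ 2
      + ‖v 3‖ ^ 2 with hr
  have hrpos : 0 < r := by
    rcases lt_or_eq_of_le (by positivity : (0:ℝ) ≤ r) with hlt | heq
    · exact hlt
    · exfalso
      apply hvne
      have p0 := sq_nonneg (‖v 0‖)
      have p1 := sq_nonneg (‖v 1‖)
      have p2 := sq_nonneg (‖v 2‖)
      have p3 := sq_nonneg (‖v 3‖)
      have e0 : v 0 = 0 := norm_eq_zero.mp (sq_eq_zero_iff.mp (by linarith))
      have e1 : v 1 = 0 := norm_eq_zero.mp (sq_eq_zero_iff.mp (by linarith))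
      have e2 : v 2 = 0 := norm_eq_zero.mp (sq_eq_zero_iff.mp (by linarith))
      have e3 : v 3 = 0 := norm_eq_zero.mp (sq_eq_zero_iff.mp (by linarith))
      funext i
      fin_cases i
      · exact e0
      · exact e1
      · exact e2
      · exact e3
      · exact hv4
  set k : ℝ := (Real.sqrt r)⁻¹ with hkdef
  have hsne : Real.sqrt r ≠ 0 := ne_of_gt (Real.sqrt_pos.mpr hrpos)
  have hk2 : k * k * r = 1 := by
    rw [hkdef]
    field_simp
    rw [Real.sq_sqrt hrpos.le]
  have hks : (k : ℂ) * (starRingEnd ℂ) ((k : ℂ)) * ((r : ℝ) : ℂ) = 1 := by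
    rw [Complex.conj_ofReal]
    have := congrArg (Complex.ofReal) hk2
    push_cast at this ⊢
    linear_combination this
  set u : Fin 5 → ℂ := fun i => (k : ℂ) * v i with hu
  have hu4 : u 4 = 0 := by simp [hu, hv4]
  have hvsum : (starRingEnd ℂ) (v 0) * v 0 + (starRingEnd ℂ) (v 1) * v 1
      + (starRingEnd ℂ) (v 2) * v 2 + (starRingEnd ℂ) (v 3) * v 3 = ((r : ℝ) : ℂ) := by
    simp only [conj_mul_self']
    rw [hr]
    push_cast
    ring
  have hnu : (starRingEnd ℂ) (u 0) * u 0 + (starRingEnd ℂ) (u 1) * u 1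
      + (starRingEnd ℂ) (u 2) * u 2 + (starRingEnd ℂ) (u 3) * u 3 = 1 := by
    simp only [hu, _root_.map_mul]
    linear_combination ((k : ℂ) * (starRingEnd ℂ) ((k : ℂ))) * hvsum + hks
  have hGu : Gfun A u = 0 := by
    have hueq : u = (k : ℂ) • v := rfl
    rw [hueq, Gfun_smul, hvG, mul_zero]
  -- construct c₀
  set em : Fin 4 → Fin 5 := ![0, 1, 2, 3] with hem
  set N : Matrix (Fin 4) (Fin 4) ℂ := Matrix.of fun i j =>
    if i = 0 then (starRingEnd ℂ) (u (em j))
    else if i = 1 then (starRingEnd ℂ) ((Jst u) (em j)) else 0 with hN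
  have hdetN : N.det = 0 := Matrix.det_eq_zero_of_row_eq_zero 2 (fun j => by simp [hN])
  obtain ⟨c, hcne, hck⟩ : ∃ c ≠ 0, N *ᵥ c = 0 :=
    (Matrix.exists_mulVec_eq_zero_iff).mpr hdetN
  have o1 : (starRingEnd ℂ) (u 0) * c 0 + (starRingEnd ℂ) (u 1) * c 1
      + (starRingEnd ℂ) (u 2) * c 2 + (starRingEnd ℂ) (u 3) * c 3 = 0 := by
    have h0 := congrFun hck 0
    simpa [hN, hem, mulVec, dotProduct, Fin.sum_univ_four] using h0
  have o2 : -(u 2 * c 0) - u 3 * c 1 + u 0 * c 2 + u 1 * c 3 = 0 := by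
    have h1 := congrFun hck 1
    simp [hN, hem, mulVec, dotProduct, Fin.sum_univ_four, Jst] at h1
    linear_combination h1
  set rc : ℝ := ‖c 0‖ ^ 2 + ‖c 1‖ ^ 2 + ‖c 2‖ ^ 2
      + ‖c 3‖ ^ 2 with hrc
  have hrcpos : 0 < rc := by
    rcases lt_or_eq_of_le (by positivity : (0:ℝ) ≤ rc) with hlt | heq
    · exact hlt
    · exfalso
      apply hcne
      have p0 := sq_nonneg (‖c 0‖)
      have p1 := sq_nonneg (‖c 1‖)
      have p2 := sq_nonneg (‖c 2‖)
      have p3 := sq_nonneg (‖c 3‖)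
      have e0 : c 0 = 0 := norm_eq_zero.mp (sq_eq_zero_iff.mp (by linarith))
      have e1 : c 1 = 0 := norm_eq_zero.mp (sq_eq_zero_iff.mp (by linarith))
      have e2 : c 2 = 0 := norm_eq_zero.mp (sq_eq_zero_iff.mp (by linarith))
      have e3 : c 3 = 0 := norm_eq_zero.mp (sq_eq_zero_iff.mp (by linarith))
      funext i
      fin_cases i
      · exact e0
      · exact e1
      · exact e2
      · exact e3
  set kc : ℝ := (Real.sqrt rc)⁻¹ with hkcdef
  have hscne : Real.sqrt rc ≠ 0 := ne_of_gt (Real.sqrt_pos.mpr hrcpos)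
  have hkc2 : kc * kc * rc = 1 := by
    rw [hkcdef]
    field_simp
    rw [Real.sq_sqrt hrcpos.le]
  have hkcs : (kc : ℂ) * (starRingEnd ℂ) ((kc : ℂ)) * ((rc : ℝ) : ℂ) = 1 := by
    rw [Complex.conj_ofReal]
    have := congrArg (Complex.ofReal) hkc2
    push_cast at this ⊢
    linear_combination this
  set ct : Fin 5 → ℂ := ![c 0, c 1, c 2, c 3, 0] with hct
  set c₀ : Fin 5 → ℂ := fun i => (kc : ℂ) * ct i with hc₀
  have hc4 : c₀ 4 = 0 := by simp [hc₀, hct]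
  have hcsum : (starRingEnd ℂ) (c 0) * c 0 + (starRingEnd ℂ) (c 1) * c 1
      + (starRingEnd ℂ) (c 2) * c 2 + (starRingEnd ℂ) (c 3) * c 3 = ((rc : ℝ) : ℂ) := by
    simp only [conj_mul_self']
    rw [hrc]
    push_cast
    ring
  have hnc : (starRingEnd ℂ) (c₀ 0) * c₀ 0 + (starRingEnd ℂ) (c₀ 1) * c₀ 1
      + (starRingEnd ℂ) (c₀ 2) * c₀ 2 + (starRingEnd ℂ) (c₀ 3) * c₀ 3 = 1 := by
    simp only [hc₀, hct, _root_.map_mul]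
    simp only [Matrix.cons_val_zero, Matrix.cons_val_one, Matrix.head_cons,
      Matrix.cons_val_two, Matrix.tail_cons, Matrix.cons_val_three]
    linear_combination ((kc : ℂ) * (starRingEnd ℂ) ((kc : ℂ))) * hcsum + hkcs
  have o1c := congrArg (starRingEnd ℂ) o1
  have o2c := congrArg (starRingEnd ℂ) o2
  simp only [map_add, map_sub, map_neg, _root_.map_mul, Complex.conj_conj, map_zero] at o1c o2c
  have ho1 : (starRingEnd ℂ) (c₀ 0) * u 0 + (starRingEnd ℂ) (c₀ 1) * u 1
      + (starRingEnd ℂ) (c₀ 2) * u 2 + (starRingEnd ℂ) (c₀ 3) * u 3 = 0 := by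
    simp only [hc₀, hct, _root_.map_mul]
    simp only [Matrix.cons_val_zero, Matrix.cons_val_one, Matrix.head_cons,
      Matrix.cons_val_two, Matrix.tail_cons, Matrix.cons_val_three]
    linear_combination ((starRingEnd ℂ) ((kc : ℂ))) * o1c
  have ho2 : -((starRingEnd ℂ) (c₀ 0) * (starRingEnd ℂ) (u 2))
      - (starRingEnd ℂ) (c₀ 1) * (starRingEnd ℂ) (u 3)
      + (starRingEnd ℂ) (c₀ 2) * (starRingEnd ℂ) (u 0)
      + (starRingEnd ℂ) (c₀ 3) * (starRingEnd ℂ) (u 1) = 0 := by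
    simp only [hc₀, hct, _root_.map_mul]
    simp only [Matrix.cons_val_zero, Matrix.cons_val_one, Matrix.head_cons,
      Matrix.cons_val_two, Matrix.tail_cons, Matrix.cons_val_three]
    linear_combination ((starRingEnd ℂ) ((kc : ℂ))) * o2c
  obtain ⟨h, hSp2, hcol1, hcol3⟩ := build_h u c₀ hu4 hc4 hnu hnc ho1 ho2
  refine ⟨h, hSp2, ?_⟩
  have hm1 : ∀ ℓ, (A * h) ℓ 1 = (A *ᵥ u) ℓ := by
    intro ℓ
    simp only [Matrix.mul_apply, Matrix.mulVec, dotProduct]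
    exact Finset.sum_congr rfl fun x _ => by rw [hcol1]
  have hm3 : ∀ ℓ, (A * h) ℓ 3 = (A *ᵥ Jst u) ℓ := by
    intro ℓ
    simp only [Matrix.mul_apply, Matrix.mulVec, dotProduct]
    exact Finset.sum_congr rfl fun x _ => by rw [hcol3]
  have : (∑ ℓ : Fin 5, (‖(A * h) ℓ 1‖ ^ 2 + ‖(A * h) ℓ 3‖ ^ 2) *
      (((![1, 1, 1, -1, -3] : Fin 5 → ℤ) ℓ : ℤ) : ℝ)) = Gfun A u := by
    unfold Gfun
    apply Finset.sum_congr rfl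
    intro ℓ _
    rw [hm1, hm3]
    congr 1
    fin_cases ℓ <;> norm_num [qv]
  rw [this, hGu]
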